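/- Let (β₁, ..., β_{2^L}) be a Cantor basis of GF(2^{2^L}) over GF(2), and set W_i = span_{GF(2)}(β₁, ..., β_i). Then for each i with 1 ≤ i < 2^L, the map x ↦ x² - x sends W_{i+1} onto W_i. -/

import Mathlib

/-- Let `(β₁, …, β_{2^L})` be a Cantor basis of `GF(2^(2^L))` over `GF(2)` and
`Wᵢ` the span of the first `i` basis elements.  For `1 ≤ i < 2^L`, the map
`x ↦ x² - x` sends `W_{i+1}` onto `Wᵢ`. -/
theorem cantor_map_onto (L : ℕ) (hL : 0 < L)
    (b : Module.Basis (Fin (2 ^ L)) (ZMod 2) (GaloisField 2 (2 ^ L)))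
    (hb1 : b ⟨0, by positivity⟩ = 1)
    (hb : ∀ i : ℕ, ∀ h : i + 1 < 2 ^ L,
      (b ⟨i + 1, h⟩) ^ 2 - b ⟨i + 1, h⟩ = b ⟨i, by omega⟩)
    (W : ℕ → Submodule (ZMod 2) (GaloisField 2 (2 ^ L)))
    (hW : ∀ i, W i = Submodule.span (ZMod 2) (b '' {j : Fin (2 ^ L) | (j : ℕ) < i}))
    (i : ℕ) (hi1 : 1 ≤ i) (hi2 : i < 2 ^ L) :
    (fun x => x ^ 2 - x) '' ((W (i + 1) : Set (GaloisField 2 (2 ^ L)))) =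
      (W i : Set (GaloisField 2 (2 ^ L))) := by
  haveI : Fact (Nat.Prime 2) := ⟨Nat.prime_two⟩
  set K := GaloisField 2 (2 ^ L) with hK
  haveI : CharP K 2 := inferInstance
  let f : K →ₗ[ZMod 2] K :=
  { toFun := fun x => x ^ 2 - x
    map_add' := by
      intro x y
      have h1 : (x + y) ^ 2 = x ^ 2 + y ^ 2 := CharTwo.add_sq x y
      beta_reduce
      rw [h1]; ring
    map_smul' := by
      intro c x
      have hc : c ^ 2 = c := ZMod.pow_card c
      simp only [smul_pow, hc, RingHom.id_apply, smul_sub] }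
  have key : Submodule.map f (W (i+1)) = W i := by
    rw [hW, hW, Submodule.map_span]
    apply le_antisymm
    · rw [Submodule.span_le]
      rintro _ ⟨_, ⟨j, hj, rfl⟩, rfl⟩
      simp only [Set.mem_setOf_eq] at hj
      by_cases h0 : (j : ℕ) = 0
      · have hj0 : j = ⟨0, by positivity⟩ := Fin.ext h0
        have : f (b j) = 0 := by
          simp only [f, LinearMap.coe_mk, AddHom.coe_mk, hj0, hb1]
          ring
        rw [this]; exact Submodule.zero_mem _
      · obtain ⟨k, hk⟩ : ∃ k, (j : ℕ) = k + 1 := ⟨(j : ℕ) - 1, by omega⟩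
        have hk2 : k + 1 < 2 ^ L := by omega
        have hjk : j = ⟨k + 1, hk2⟩ := Fin.ext hk
        have : f (b j) = b ⟨k, by omega⟩ := by
          simp only [f, LinearMap.coe_mk, AddHom.coe_mk, hjk]
          exact hb k hk2
        rw [this]
        exact Submodule.subset_span ⟨⟨k, by omega⟩, by simp; omega, rfl⟩
    · rw [Submodule.span_le]
      rintro _ ⟨j, hj, rfl⟩
      simp only [Set.mem_setOf_eq] at hj
      have hk2 : (j : ℕ) + 1 < 2 ^ L := by omega
      apply Submodule.subset_span
      refine ⟨b ⟨(j : ℕ) + 1, hk2⟩, ⟨⟨(j : ℕ) + 1, hk2⟩, by simp; omega, rfl⟩, ?_⟩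
      show b ⟨(j : ℕ) + 1, hk2⟩ ^ 2 - b ⟨(j : ℕ) + 1, hk2⟩ = b j
      rw [hb (j : ℕ) hk2]
  calc (fun x => x ^ 2 - x) '' (W (i+1) : Set K) = f '' (W (i+1) : Set K) := rfl
    _ = (Submodule.map f (W (i+1)) : Set K) := (Submodule.map_coe f _).symm
    _ = (W i : Set K) := by rw [key]
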